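/- If (F^0, F^1, s^0, s^1) and (G^0, G^1, t^0, t^1) are matrix factorizations of f and g respectively over Q, then (F^0 ⊗ G^0 ⊕ F^1 ⊗ G^1, F^1 ⊗ G^0 ⊕ F^0 ⊗ G^1, with the standard tensor product differentials) is a matrix factorization of f + g. -/
import Mathlib

open TensorProduct

theorem tensorProduct_matrixFactorization
    (Q : Type*) [CommRing Q] (f g : Q)
    (F0 F1 G0 G1 : Type*)
    [AddCommGroup F0] [Module Q F0] [Module.Free Q F0] [Module.Finite Q F0]
    [AddCommGroup F1] [Module Q F1] [Module.Free Q F1] [Module.Finite Q F1]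
    [AddCommGroup G0] [Module Q G0] [Module.Free Q G0] [Module.Finite Q G0]
    [AddCommGroup G1] [Module Q G1] [Module.Free Q G1] [Module.Finite Q G1]
    (s0 : F0 →ₗ[Q] F1) (s1 : F1 →ₗ[Q] F0)
    (t0 : G0 →ₗ[Q] G1) (t1 : G1 →ₗ[Q] G0)
    (hs10 : s1 ∘ₗ s0 = f • (LinearMap.id : F0 →ₗ[Q] F0))
    (hs01 : s0 ∘ₗ s1 = f • (LinearMap.id : F1 →ₗ[Q] F1))
    (ht10 : t1 ∘ₗ t0 = g • (LinearMap.id : G0 →ₗ[Q] G0))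
    (ht01 : t0 ∘ₗ t1 = g • (LinearMap.id : G1 →ₗ[Q] G1)) :
    let u0 : (F0 ⊗[Q] G0) × (F1 ⊗[Q] G1) →ₗ[Q] (F1 ⊗[Q] G0) × (F0 ⊗[Q] G1) :=
      LinearMap.prod
        (LinearMap.coprod (LinearMap.rTensor G0 s0) (-(LinearMap.lTensor F1 t1)))
        (LinearMap.coprod (LinearMap.lTensor F0 t0) (LinearMap.rTensor G1 s1))
    let u1 : (F1 ⊗[Q] G0) × (F0 ⊗[Q] G1) →ₗ[Q] (F0 ⊗[Q] G0) × (F1 ⊗[Q] G1) :=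
      LinearMap.prod
        (LinearMap.coprod (LinearMap.rTensor G0 s1) (LinearMap.lTensor F0 t1))
        (LinearMap.coprod (-(LinearMap.lTensor F1 t0)) (LinearMap.rTensor G1 s0))
    u1 ∘ₗ u0 = (f + g) • LinearMap.id ∧ u0 ∘ₗ u1 = (f + g) • LinearMap.id := by
  intro u0 u1
  have hs10' := LinearMap.congr_fun hs10
  have hs01' := LinearMap.congr_fun hs01
  have ht10' := LinearMap.congr_fun ht10
  have ht01' := LinearMap.congr_fun ht01
  simp only [LinearMap.comp_apply, LinearMap.smul_apply, LinearMap.id_apply] at hs10' hs01' ht10' ht01'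
  constructor <;>
  · apply LinearMap.prod_ext <;> apply TensorProduct.ext' <;> intro x y <;>
    simp [u0, u1, hs10', hs01', ht10', ht01', TensorProduct.smul_tmul', TensorProduct.tmul_smul,
      add_smul, add_tmul, tmul_add]
    <;> abel
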